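/- For a polytope D = convexhull{x^(1),…,x^(m)} of states, the one-step reachable set R(D) = {Kx : K ∈ 𝒦, x ∈ D} equals the convex hull of the finitely many points {K̂^(ℓ) x^(s)} over all extreme actions K̂^(ℓ) ∈ 𝒦̂ and vertices x^(s). -/

import Mathlib

open Finset

/-- Left-stochastic matrix supported on adjacency pattern `A`. -/
def IsStoch {I : Type*} [Fintype I] (A K : Matrix I I ℝ) : Prop :=
  (∀ i j, 0 ≤ K i j) ∧ (∀ j, ∑ i, K i j = 1) ∧ ∀ i j, A i j = 0 → K i j = 0

/-- `{0,1}`-valued left-stochastic matrix supported on `A` (extreme action). -/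
def IsExtreme01 {I : Type*} [Fintype I] (A K : Matrix I I ℝ) : Prop :=
  IsStoch A K ∧ ∀ i j, K i j = 0 ∨ K i j = 1

lemma stoch_mem_hull {N : ℕ} (A K : Matrix (Fin N) (Fin N) ℝ)
    (hA01 : ∀ i j, A i j = 0 ∨ A i j = 1) (hK : IsStoch A K) :
    K ∈ convexHull ℝ {M : Matrix (Fin N) (Fin N) ℝ | IsExtreme01 A M} := by
  classical
  obtain ⟨hpos, hsum, hsupp⟩ := hK
  set E : (Fin N → Fin N) → Matrix (Fin N) (Fin N) ℝ :=
    fun f => Matrix.of fun i j => if i = f j then (1:ℝ) else 0 with hE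
  set w : (Fin N → Fin N) → ℝ := fun f => ∏ j, K (f j) j with hw
  set t : Finset (Fin N → Fin N) := Finset.univ.filter (fun f => ∀ j, A (f j) j = 1) with ht
  have hzero : ∀ f ∉ t, w f = 0 := by
    intro f hf
    simp only [ht, Finset.mem_filter, Finset.mem_univ, true_and, not_forall] at hf
    obtain ⟨j, hj⟩ := hf
    have hA0 : A (f j) j = 0 := (hA01 (f j) j).resolve_right hj
    exact Finset.prod_eq_zero (Finset.mem_univ j) (hsupp _ _ hA0)
  have hwnn : ∀ f, 0 ≤ w f := fun f => Finset.prod_nonneg (fun j _ => hpos _ _)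
  have hsumw : ∑ f ∈ t, w f = 1 := by
    rw [Finset.sum_subset t.subset_univ (fun f _ hf => hzero f hf)]
    have := (Finset.prod_univ_sum (fun _ : Fin N => (Finset.univ : Finset (Fin N)))
      (fun j i => K i j))
    rw [Fintype.piFinset_univ] at this
    rw [← this]
    simp [hsum]
  have hpoint : ∀ f ∈ t, IsExtreme01 A (E f) := by
    intro f hf
    simp only [ht, Finset.mem_filter, Finset.mem_univ, true_and] at hf
    refine ⟨⟨fun i j => by simp only [hE, Matrix.of_apply]; split <;> norm_num,
      fun j => by simp [hE, Matrix.of_apply, Finset.sum_ite_eq'], fun i j hA => ?_⟩,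
      fun i j => by simp only [hE, Matrix.of_apply]; split <;> simp⟩
    simp only [hE, Matrix.of_apply]
    rw [if_neg]
    rintro rfl
    rw [hf j] at hA
    norm_num at hA
  have hKeq : ∑ f ∈ t, w f • E f = K := by
    rw [Finset.sum_subset t.subset_univ (fun f _ hf => by rw [hzero f hf, zero_smul])]
    ext i j₀
    have happ : (∑ f : Fin N → Fin N, w f • E f) i j₀
        = ∑ f : Fin N → Fin N, w f * (if i = f j₀ then (1:ℝ) else 0) := by
      rw [Matrix.sum_apply]
      rfl
    rw [happ]
    set g : Fin N → Fin N → ℝ :=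
      fun j i' => K i' j * (if j = j₀ then (if i' = i then (1:ℝ) else 0) else 1) with hg
    have h1 : ∏ j, ∑ i', g j i' = K i j₀ := by
      have hfac : ∀ j, ∑ i', g j i' = if j = j₀ then K i j₀ else 1 := by
        intro j
        by_cases hj : j = j₀
        · subst hj
          simp [hg, Finset.sum_ite_eq', mul_comm]
        · simp [hg, hj, hsum j]
      rw [Finset.prod_congr rfl (fun j _ => hfac j), Finset.prod_ite_eq']
      simp
    have h2 := (Finset.prod_univ_sum (fun _ : Fin N => (Finset.univ : Finset (Fin N))) g)
    rw [Fintype.piFinset_univ] at h2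
    have h3 : ∀ f : Fin N → Fin N, ∏ j, g j (f j) = w f * (if i = f j₀ then (1:ℝ) else 0) := by
      intro f
      rw [hg, hw]
      rw [Finset.prod_mul_distrib, Finset.prod_ite_eq']
      simp only [Finset.mem_univ, if_true]
      congr 1
      by_cases h : f j₀ = i
      · simp [h]
      · simp [h, Ne.symm h]
    rw [← Finset.sum_congr rfl (fun f _ => h3 f), ← h2, h1]
  have hmem := Finset.centerMass_mem_convexHull (R := ℝ) (z := E)
    (s := {M : Matrix (Fin N) (Fin N) ℝ | IsExtreme01 A M}) t (fun f _ => hwnn f)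
    (by rw [hsumw]; norm_num) (fun f hf => (hpoint f hf : E f ∈ {M : Matrix (Fin N) (Fin N) ℝ | IsExtreme01 A M}))
  rwa [Finset.centerMass, hsumw, inv_one, one_smul, hKeq] at hmem

lemma hull_nonneg {N m : ℕ} (xs : Fin m → Fin N → ℝ) (hxs : ∀ s i, 0 ≤ xs s i)
    {x : Fin N → ℝ} (hx : x ∈ convexHull ℝ (Set.range xs)) : ∀ i, 0 ≤ x i := by
  have hconv : Convex ℝ {y : Fin N → ℝ | ∀ i, 0 ≤ y i} := by
    intro y hy z hz a b ha hb hab i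
    simp only [Pi.add_apply, Pi.smul_apply, smul_eq_mul]
    exact add_nonneg (mul_nonneg ha (hy i)) (mul_nonneg hb (hz i))
  exact convexHull_min (by rintro y ⟨s, rfl⟩; exact fun i => hxs s i) hconv hx

theorem stmt17 {N m : ℕ} (A : Matrix (Fin N) (Fin N) ℝ)
    (hA01 : ∀ i j, A i j = 0 ∨ A i j = 1)
    (hcol : ∀ j, ∃ i, A i j = 1)
    (xs : Fin m → Fin N → ℝ) (hxs : ∀ s i, 0 ≤ xs s i) :
    {v : Fin N → ℝ | ∃ K x0, IsStoch A K ∧ x0 ∈ convexHull ℝ (Set.range xs) ∧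
        v = K.mulVec x0}
      = convexHull ℝ
        {v : Fin N → ℝ | ∃ K s, IsExtreme01 A K ∧ v = K.mulVec (xs s)} := by
  classical
  apply Set.Subset.antisymm
  · rintro v ⟨K, x0, hK, hx0, rfl⟩
    have h1 : K.mulVec x0 ∈ (Matrix.mulVecLin K) '' (convexHull ℝ (Set.range xs)) :=
      ⟨x0, hx0, by simp [Matrix.mulVecLin_apply]⟩
    rw [LinearMap.image_convexHull] at h1
    refine convexHull_min ?_ (convex_convexHull ℝ _) h1
    rintro v ⟨x, ⟨s, rfl⟩, rfl⟩
    have h2 := stoch_mem_hull A K hA01 hK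
    let L : Matrix (Fin N) (Fin N) ℝ →ₗ[ℝ] (Fin N → ℝ) :=
      { toFun := fun M => M.mulVec (xs s),
        map_add' := fun M1 M2 => Matrix.add_mulVec M1 M2 (xs s),
        map_smul' := fun c M => Matrix.smul_mulVec c M (xs s) }
    have h3 : L K ∈ L '' convexHull ℝ {M | IsExtreme01 A M} := ⟨K, h2, rfl⟩
    rw [LinearMap.image_convexHull] at h3
    have h4 : L '' {M | IsExtreme01 A M}
        ⊆ {v : Fin N → ℝ | ∃ K s, IsExtreme01 A K ∧ v = K.mulVec (xs s)} := by
      rintro v ⟨M, hM, rfl⟩; exact ⟨M, s, hM, rfl⟩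
    have h5 := convexHull_mono h4 h3
    simpa [Matrix.mulVecLin_apply, L] using h5
  · apply convexHull_min
    · rintro v ⟨K, s, hK, rfl⟩
      exact ⟨K, xs s, hK.1, subset_convexHull ℝ _ ⟨s, rfl⟩, rfl⟩
    · rintro v₁ ⟨K₁, x₁, h1, hx1, rfl⟩ v₂ ⟨K₂, x₂, h2, hx2, rfl⟩ a b ha hb hab
      have hn1 := hull_nonneg xs hxs hx1
      have hn2 := hull_nonneg xs hxs hx2
      set d : Fin N → ℝ := fun j => a * x₁ j + b * x₂ j with hd
      have hdnn : ∀ j, 0 ≤ d j := fun j =>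
        add_nonneg (mul_nonneg ha (hn1 j)) (mul_nonneg hb (hn2 j))
      choose i0 hi0 using hcol
      set K : Matrix (Fin N) (Fin N) ℝ := Matrix.of fun i j =>
        if d j = 0 then (if i = i0 j then (1:ℝ) else 0)
        else (a * x₁ j * K₁ i j + b * x₂ j * K₂ i j) / d j with hKdef
      refine ⟨K, a • x₁ + b • x₂, ⟨?_, ?_, ?_⟩,
        (convex_convexHull ℝ _) hx1 hx2 ha hb hab, ?_⟩
      · intro i j
        simp only [hKdef, Matrix.of_apply]
        split
        · split <;> norm_num
        · exact div_nonneg (add_nonneg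
            (mul_nonneg (mul_nonneg ha (hn1 j)) (h1.1 i j))
            (mul_nonneg (mul_nonneg hb (hn2 j)) (h2.1 i j))) (hdnn j)
      · intro j
        simp only [hKdef, Matrix.of_apply]
        by_cases hj : d j = 0
        · simp [hj, Finset.sum_ite_eq']
        · simp only [if_neg hj]
          rw [← Finset.sum_div]
          have hnum : ∑ i, (a * x₁ j * K₁ i j + b * x₂ j * K₂ i j) = d j := by
            rw [Finset.sum_add_distrib, ← Finset.mul_sum, ← Finset.mul_sum,
              h1.2.1 j, h2.2.1 j, mul_one, mul_one]
          rw [hnum, div_self hj]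
      · intro i j hA
        simp only [hKdef, Matrix.of_apply]
        split
        · rw [if_neg]
          rintro rfl
          rw [hi0 j] at hA
          norm_num at hA
        · rw [h1.2.2 i j hA, h2.2.2 i j hA]
          simp
      · funext i
        simp only [Pi.add_apply, Pi.smul_apply, smul_eq_mul, Matrix.mulVec, dotProduct]
        rw [Finset.mul_sum, Finset.mul_sum, ← Finset.sum_add_distrib]
        apply Finset.sum_congr rfl
        intro j _
        simp only [hKdef, Matrix.of_apply, Pi.add_apply, Pi.smul_apply, smul_eq_mul]
        have hdj : a * x₁ j + b * x₂ j = d j := rfl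
        by_cases hj : d j = 0
        · have h01 := (add_eq_zero_iff_of_nonneg (mul_nonneg ha (hn1 j))
            (mul_nonneg hb (hn2 j))).mp (hdj.trans hj)
          rw [if_pos hj]
          linear_combination (K₁ i j - (if i = i0 j then (1:ℝ) else 0)) * h01.1
            + (K₂ i j - (if i = i0 j then (1:ℝ) else 0)) * h01.2
        · rw [if_neg hj, hdj, div_mul_cancel₀ _ hj]
          ring
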